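/- arXiv:1612.08531 — 2 statements merged into one kernel-verified Lean document; each statement's English description precedes it below -/
import Mathlib

section
/- For any finite simple graph G, the matching gap μ(G) = ν(G) − β(G) is at least 1 if and only if G has a maximal matching with an augmenting P4. -/
open SimpleGraph

variable {V : Type*}

/-- `M` is a matching in `G`: a set of pairwise vertex-disjoint edges of `G`. -/
def IsMatchingIn (G : SimpleGraph V) (M : Finset (Sym2 V)) : Prop :=
  (∀ e ∈ M, e ∈ G.edgeSet) ∧
    ∀ e ∈ M, ∀ f ∈ M, e ≠ f → ∀ v : V, v ∈ e → v ∉ f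

/-- `M` is a maximal matching in `G`: a matching not properly contained in another matching. -/
def IsMaximalMatchingIn (G : SimpleGraph V) (M : Finset (Sym2 V)) : Prop :=
  IsMatchingIn G M ∧ ∀ M', IsMatchingIn G M' → M ⊆ M' → M' = M

/-- `M` saturates (covers) the vertex `v`. -/
def Sat (M : Finset (Sym2 V)) (v : V) : Prop := ∃ e ∈ M, v ∈ e

/-- The matching number `ν(G)`. -/
noncomputable def nuNum (G : SimpleGraph V) : ℕ :=
  sSup {n | ∃ M, IsMatchingIn G M ∧ M.card = n}

/-- The minimum maximal matching number `β(G)`. -/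
noncomputable def betaNum (G : SimpleGraph V) : ℕ :=
  sInf {n | ∃ M, IsMaximalMatchingIn G M ∧ M.card = n}

/-- The matching gap `μ(G) = ν(G) - β(G)`. -/
noncomputable def muGap (G : SimpleGraph V) : ℕ := nuNum G - betaNum G

/-- `M` has an augmenting `P₄`: a path `u w y v` on four distinct vertices with
`wy ∈ M` and `u`, `v` not saturated by `M`. -/
def HasAugP4 (G : SimpleGraph V) (M : Finset (Sym2 V)) : Prop :=
  ∃ u w y v : V, u ≠ w ∧ u ≠ y ∧ u ≠ v ∧ w ≠ y ∧ w ≠ v ∧ y ≠ v ∧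
    G.Adj u w ∧ G.Adj w y ∧ G.Adj y v ∧ s(w, y) ∈ M ∧ ¬ Sat M u ∧ ¬ Sat M v


/- auxiliary lemmas -/


section Aux

lemma disj_symm {e f : Sym2 V} (h : ∀ v : V, v ∈ e → v ∉ f) :
    ∀ v : V, v ∈ f → v ∉ e := fun v hv hv' => h v hv' hv

open Classical in
/-- vertices of an edge, as a finset -/
noncomputable def eVerts [Fintype V] (e : Sym2 V) : Finset V :=
  Set.toFinset {v | v ∈ e}

lemma mem_eVerts [Fintype V] {e : Sym2 V} {v : V} : v ∈ eVerts e ↔ v ∈ e := by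
  classical simp [eVerts, Set.mem_toFinset]

lemma eVerts_pair [Fintype V] [DecidableEq V] (a b : V) : eVerts (s(a, b)) = {a, b} := by
  classical
  ext v
  simp [mem_eVerts, Sym2.mem_iff, Finset.mem_insert]

lemma card_eVerts [Fintype V] {e : Sym2 V} (h : ¬ e.IsDiag) : (eVerts e).card = 2 := by
  classical
  induction e using Sym2.ind with
  | _ a b =>
    rw [eVerts_pair]
    rw [Sym2.mk_isDiag_iff] at h
    rw [Finset.card_pair h]

lemma mem_satFinset [Fintype V] {M : Finset (Sym2 V)} {v : V} [DecidableEq V] :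
    v ∈ M.biUnion eVerts ↔ Sat M v := by
  simp [Finset.mem_biUnion, mem_eVerts, Sat]

lemma card_satFinset [Fintype V] [DecidableEq V] {G : SimpleGraph V} {M : Finset (Sym2 V)}
    (hM : IsMatchingIn G M) : (M.biUnion eVerts).card = 2 * M.card := by
  rw [Finset.card_biUnion]
  · rw [Finset.sum_congr rfl (fun e he => card_eVerts (G.not_isDiag_of_mem_edgeSet (hM.1 e he)))]
    simp [Finset.sum_const, Nat.mul_comm]
  · intro e he f hf hef
    rw [Function.onFun, Finset.disjoint_left]
    intro v hv hv'
    exact hM.2 e he f hf hef v (mem_eVerts.mp hv) (mem_eVerts.mp hv')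

/-- If `|M| < |N|`, some vertex is saturated by `N` but not `M`. -/
lemma exists_unsat [Fintype V] {G : SimpleGraph V} {M N : Finset (Sym2 V)}
    (hM : IsMatchingIn G M) (hN : IsMatchingIn G N) (h : M.card < N.card) :
    ∃ u, Sat N u ∧ ¬ Sat M u := by
  classical
  by_contra hc
  push_neg at hc
  have hsub : N.biUnion eVerts ⊆ M.biUnion eVerts := by
    intro v hv
    exact mem_satFinset.mpr (hc v (mem_satFinset.mp hv))
  have := Finset.card_le_card hsub
  rw [card_satFinset hM, card_satFinset hN] at this
  omega

/-- Maximality: an edge with one unsaturated endpoint has the other saturated. -/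
lemma sat_of_adj {G : SimpleGraph V} {M : Finset (Sym2 V)}
    (hM : IsMaximalMatchingIn G M) {a b : V} (hadj : G.Adj a b) (ha : ¬ Sat M a) :
    Sat M b := by
  classical
  by_contra hb
  have hab : s(a, b) ∉ M := fun h => ha ⟨_, h, Sym2.mem_mk_left a b⟩
  have hmatch : IsMatchingIn G (insert (s(a, b)) M) := by
    constructor
    · intro e he
      rcases Finset.mem_insert.mp he with rfl | he
      · exact hadj
      · exact hM.1.1 e he
    · intro e he f hf hef v hv
      have key : ∀ g ∈ M, ∀ x : V, x ∈ s(a, b) → x ∉ g := by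
        intro g hg x hx hxg
        rcases Sym2.mem_iff.mp hx with rfl | rfl
        · exact ha ⟨g, hg, hxg⟩
        · exact hb ⟨g, hg, hxg⟩
      rcases Finset.mem_insert.mp he with rfl | he <;>
        rcases Finset.mem_insert.mp hf with rfl | hf
      · exact absurd rfl hef
      · exact key f hf v hv
      · exact disj_symm (key e he) v hv
      · exact hM.1.2 e he f hf hef v hv
  have := hM.2 _ hmatch (Finset.subset_insert _ _)
  have : s(a, b) ∈ M := this ▸ Finset.mem_insert_self _ _
  exact hab this

/-- Key induction: a maximal matching beaten by some matching yields a maximal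
matching with an augmenting P4. -/
lemma key_lemma [Fintype V] [DecidableEq (Sym2 V)] (G : SimpleGraph V) :
    ∀ k : ℕ, ∀ M N : Finset (Sym2 V), IsMaximalMatchingIn G M → IsMatchingIn G N →
      M.card < N.card → (M \ N).card ≤ k →
      ∃ M', IsMaximalMatchingIn G M' ∧ HasAugP4 G M' := by
  classical
  intro k
  induction k with
  | zero =>
    intro M N hM hN hcard hk
    have : M \ N = ∅ := Finset.card_eq_zero.mp (Nat.le_zero.mp hk)
    have hsub : M ⊆ N := by
      intro e he
      by_contra h
      exact (Finset.notMem_empty e) (this ▸ Finset.mem_sdiff.mpr ⟨he, h⟩)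
    have heq := hM.2 N hN hsub
    rw [heq] at hcard
    exact absurd hcard (lt_irrefl _)
  | succ k ih =>
    intro M N hM hN hcard hk
    -- find u saturated by N, not by M
    obtain ⟨u, hNu, hMu⟩ := exists_unsat hM.1 hN hcard
    obtain ⟨e, heN, hue⟩ := hNu
    obtain ⟨w, rfl⟩ := Sym2.mem_iff_exists.mp hue
    have huw : G.Adj u w := (hN.1 _ heN)
    -- w is saturated by M
    have hw : Sat M w := sat_of_adj hM huw hMu
    obtain ⟨f, hfM, hwf⟩ := hw
    obtain ⟨y, rfl⟩ := Sym2.mem_iff_exists.mp hwf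
    have hwy : G.Adj w y := hM.1.1 _ hfM
    have huy : u ≠ y := fun h => hMu ⟨_, hfM, h ▸ Sym2.mem_mk_right _ _⟩
    by_cases hcase : ∃ v, G.Adj y v ∧ ¬ Sat M v ∧ v ≠ u
    · obtain ⟨v, hyv, hMv, hvu⟩ := hcase
      refine ⟨M, hM, u, w, y, v, huw.ne, huy, Ne.symm hvu, hwy.ne, ?_, hyv.ne, huw, hwy, hyv,
        hfM, hMu, hMv⟩
      · intro h; exact hMv ⟨_, hfM, h ▸ Sym2.mem_mk_left _ _⟩
    · push_neg at hcase
      -- swap: M' = M - wy + uw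
      set e' : Sym2 V := s(u, w) with he'
      set f' : Sym2 V := s(w, y) with hf'
      have he'M : e' ∉ M := fun h => hMu ⟨_, h, Sym2.mem_mk_left u w⟩
      have he'f' : e' ≠ f' := by
        intro h
        rw [he', hf', Sym2.eq_iff] at h
        rcases h with ⟨h1, h2⟩ | ⟨h1, h2⟩
        · exact huw.ne h1
        · exact huy h1
      have hf'N : f' ∉ N := by
        intro h
        exact hN.2 _ heN _ h he'f' w (Sym2.mem_mk_right u w) (Sym2.mem_mk_left _ _)
      set M' : Finset (Sym2 V) := insert e' (M.erase f') with hM'def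
      -- M' is a matching
      have hM'match : IsMatchingIn G M' := by
        constructor
        · intro g hg
          rcases Finset.mem_insert.mp hg with rfl | hg
          · exact huw
          · exact hM.1.1 _ (Finset.mem_of_mem_erase hg)
        · intro g1 hg1 g2 hg2 hne v hv
          have key : ∀ g ∈ M.erase f', ∀ x : V, x ∈ e' → x ∉ g := by
            intro g hg x hx hxg
            rcases Sym2.mem_iff.mp hx with rfl | rfl
            · exact hMu ⟨g, Finset.mem_of_mem_erase hg, hxg⟩
            · exact hM.1.2 _ (Finset.mem_of_mem_erase hg) _ hfM (Finset.ne_of_mem_erase hg) x hxg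
                (Sym2.mem_mk_left _ _)
          rcases Finset.mem_insert.mp hg1 with rfl | hg1 <;>
            rcases Finset.mem_insert.mp hg2 with rfl | hg2
          · exact absurd rfl hne
          · exact key _ hg2 v hv
          · exact disj_symm (key _ hg1) v hv
          · exact hM.1.2 _ (Finset.mem_of_mem_erase hg1) _ (Finset.mem_of_mem_erase hg2) hne v hv
      -- card M' = card M
      have hcard' : M'.card = M.card := by
        rw [hM'def, Finset.card_insert_of_notMem (fun h => he'M (Finset.mem_of_mem_erase h)),
          Finset.card_erase_of_mem hfM]
        have : 1 ≤ M.card := Finset.card_pos.mpr ⟨f', hfM⟩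
        omega
      have hsatu : Sat M' u := ⟨e', Finset.mem_insert_self _ _, Sym2.mem_mk_left u w⟩
      have hsatw : Sat M' w := ⟨e', Finset.mem_insert_self _ _, Sym2.mem_mk_right u w⟩
      -- unsaturated by M' implies (unsaturated by M or = y)
      have hunsat : ∀ x : V, ¬ Sat M' x → (¬ Sat M x ∨ x = y) := by
        intro x hx
        by_cases hxM : Sat M x
        · obtain ⟨g, hgM, hxg⟩ := hxM
          by_cases hg : g = f'
          · subst hg
            rcases Sym2.mem_iff.mp hxg with rfl | rfl
            · exact absurd hsatw hx
            · exact Or.inr rfl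
          · exact absurd ⟨g, Finset.mem_insert_of_mem (Finset.mem_erase.mpr ⟨hg, hgM⟩), hxg⟩ hx
        · exact Or.inl hxM
      -- M' is maximal
      have hM'max : IsMaximalMatchingIn G M' := by
        refine ⟨hM'match, ?_⟩
        intro M'' hM'' hsub
        by_contra hne
        have : ∃ g ∈ M'', g ∉ M' := by
          by_contra h
          push_neg at h
          exact hne (Finset.Subset.antisymm h hsub)
        obtain ⟨g, hgM'', hgM'⟩ := this
        have hunsat'' : ∀ x : V, x ∈ g → ¬ Sat M' x := by
          intro x hxg ⟨g', hg'M', hxg'⟩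
          exact hM''.2 g' (hsub hg'M') g hgM'' (fun h => hgM' (h ▸ hg'M')) x hxg' hxg
        induction g using Sym2.ind with
        | _ a b =>
          have hadj : G.Adj a b := hM''.1 _ hgM''
          have ha' := hunsat'' a (Sym2.mem_mk_left a b)
          have hb' := hunsat'' b (Sym2.mem_mk_right a b)
          have hau : a ≠ u := fun h => ha' (h ▸ hsatu)
          have hbu : b ≠ u := fun h => hb' (h ▸ hsatu)
          rcases hunsat a ha' with haM | rfl
          · rcases hunsat b hb' with hbM | rfl
            · exact hbM (sat_of_adj hM hadj haM)
            · -- b = y, a unsaturated by M, adjacent to y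
              exact hau (hcase a hadj.symm haM)
          · rcases hunsat b hb' with hbM | rfl
            · exact hbu (hcase b hadj hbM)
            · exact hadj.ne rfl
      -- measure decreases
      have hf'MN : f' ∈ M \ N := Finset.mem_sdiff.mpr ⟨hfM, hf'N⟩
      have hsd : M' \ N = (M \ N).erase f' := by
        ext x
        simp only [hM'def, Finset.mem_sdiff, Finset.mem_insert, Finset.mem_erase]
        constructor
        · rintro ⟨(rfl | ⟨hx1, hx2⟩), hxN⟩
          · exact absurd heN hxN
          · exact ⟨hx1, hx2, hxN⟩
        · rintro ⟨hx1, hx2, hxN⟩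
          exact ⟨Or.inr ⟨hx1, hx2⟩, hxN⟩
      have hmeas : (M' \ N).card ≤ k := by
        rw [hsd, Finset.card_erase_of_mem hf'MN]
        omega
      exact ih M' N hM'max hN (hcard' ▸ hcard) hmeas

end Aux

theorem stmt_3 {V : Type*} [Fintype V] (G : SimpleGraph V) :
    1 ≤ muGap G ↔ ∃ M : Finset (Sym2 V), IsMaximalMatchingIn G M ∧ HasAugP4 G M := by
  classical
  have hbdd : BddAbove {n | ∃ M, IsMatchingIn G M ∧ M.card = n} := by
    refine ⟨Fintype.card (Sym2 V), ?_⟩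
    rintro n ⟨M, _, rfl⟩
    exact Finset.card_le_univ M |>.trans (le_of_eq (Finset.card_univ))
  constructor
  · intro h
    -- β < ν
    have hlt : betaNum G < nuNum G := by
      unfold muGap at h; omega
    -- maximum matching N
    have hne : {n | ∃ M, IsMatchingIn G M ∧ M.card = n}.Nonempty :=
      ⟨0, ∅, ⟨fun e he => absurd he (Finset.notMem_empty e),
        fun e he => absurd he (Finset.notMem_empty e)⟩, Finset.card_empty⟩
    obtain ⟨N, hN, hNcard⟩ := Nat.sSup_mem hne hbdd
    have hNmax : IsMaximalMatchingIn G N := by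
      refine ⟨hN, fun M' hM' hsub => ?_⟩
      have hle : M'.card ≤ N.card :=
        le_of_le_of_eq (le_csSup hbdd ⟨M', hM', rfl⟩) hNcard.symm
      exact (Finset.eq_of_subset_of_card_le hsub hle).symm
    -- minimum maximal matching M
    have hne' : {n | ∃ M, IsMaximalMatchingIn G M ∧ M.card = n}.Nonempty :=
      ⟨N.card, N, hNmax, rfl⟩
    obtain ⟨M, hM, hMcard⟩ := Nat.sInf_mem hne'
    have : M.card < N.card := by rw [hMcard, hNcard]; exact hlt
    exact key_lemma G (M \ N).card M N hM hN this le_rfl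
  · rintro ⟨M, hM, u, w, y, v, huw, huy, huv, hwy, hwv, hyv, hauw, hawy, hayv, hwyM, hMu, hMv⟩
    -- build the bigger matching
    set e1 : Sym2 V := s(u, w) with he1
    set e2 : Sym2 V := s(y, v) with he2
    set f : Sym2 V := s(w, y) with hf
    have he1M : e1 ∉ M := fun h => hMu ⟨_, h, Sym2.mem_mk_left u w⟩
    have he2M : e2 ∉ M := fun h => hMv ⟨_, h, Sym2.mem_mk_right y v⟩
    have he12 : e1 ≠ e2 := by
      intro h
      rw [he1, he2, Sym2.eq_iff] at h
      rcases h with ⟨h1, _⟩ | ⟨h1, _⟩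
      · exact huy h1
      · exact huv h1
    set N : Finset (Sym2 V) := insert e1 (insert e2 (M.erase f)) with hNdef
    have hkey1 : ∀ g ∈ M.erase f, ∀ x : V, x ∈ e1 → x ∉ g := by
      intro g hg x hx hxg
      rcases Sym2.mem_iff.mp hx with rfl | rfl
      · exact hMu ⟨g, Finset.mem_of_mem_erase hg, hxg⟩
      · exact hM.1.2 _ (Finset.mem_of_mem_erase hg) _ hwyM (Finset.ne_of_mem_erase hg) x hxg
          (Sym2.mem_mk_left _ _)
    have hkey2 : ∀ g ∈ M.erase f, ∀ x : V, x ∈ e2 → x ∉ g := by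
      intro g hg x hx hxg
      rcases Sym2.mem_iff.mp hx with rfl | rfl
      · exact hM.1.2 _ (Finset.mem_of_mem_erase hg) _ hwyM (Finset.ne_of_mem_erase hg) x hxg
          (Sym2.mem_mk_right _ _)
      · exact hMv ⟨g, Finset.mem_of_mem_erase hg, hxg⟩
    have hkey12 : ∀ x : V, x ∈ e1 → x ∉ e2 := by
      intro x hx hx'
      rcases Sym2.mem_iff.mp hx with rfl | rfl <;>
        rcases Sym2.mem_iff.mp hx' with h | h
      · exact huy h
      · exact huv h
      · exact hwy h
      · exact hwv h
    have hNmatch : IsMatchingIn G N := by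
      constructor
      · intro g hg
        rcases Finset.mem_insert.mp hg with rfl | hg
        · exact hauw
        rcases Finset.mem_insert.mp hg with rfl | hg
        · exact hayv
        · exact hM.1.1 _ (Finset.mem_of_mem_erase hg)
      · intro g1 hg1 g2 hg2 hne x hx
        rcases Finset.mem_insert.mp hg1 with rfl | hg1 <;>
          rcases Finset.mem_insert.mp hg2 with rfl | hg2
        · exact absurd rfl hne
        · rcases Finset.mem_insert.mp hg2 with rfl | hg2
          · exact hkey12 x hx
          · exact hkey1 _ hg2 x hx
        · rcases Finset.mem_insert.mp hg1 with rfl | hg1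
          · exact disj_symm hkey12 x hx
          · exact disj_symm (hkey1 _ hg1) x hx
        · rcases Finset.mem_insert.mp hg1 with rfl | hg1 <;>
            rcases Finset.mem_insert.mp hg2 with rfl | hg2
          · exact absurd rfl hne
          · exact hkey2 _ hg2 x hx
          · exact disj_symm (hkey2 _ hg1) x hx
          · exact hM.1.2 _ (Finset.mem_of_mem_erase hg1) _ (Finset.mem_of_mem_erase hg2) hne x hx
    have hNcard : N.card = M.card + 1 := by
      have h2 : e2 ∉ M.erase f := fun h => he2M (Finset.mem_of_mem_erase h)
      have h1 : e1 ∉ insert e2 (M.erase f) := by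
        intro h
        rcases Finset.mem_insert.mp h with h | h
        · exact he12 h
        · exact he1M (Finset.mem_of_mem_erase h)
      rw [hNdef, Finset.card_insert_of_notMem h1, Finset.card_insert_of_notMem h2,
        Finset.card_erase_of_mem hwyM]
      have : 1 ≤ M.card := Finset.card_pos.mpr ⟨f, hwyM⟩
      omega
    have hβ : betaNum G ≤ M.card := Nat.sInf_le ⟨M, hM, rfl⟩
    have hν : M.card + 1 ≤ nuNum G := le_csSup hbdd ⟨N, hNmatch, hNcard⟩
    unfold muGap
    omega
end

section
/- Let G be a finite simple graph. A subset S of V(G) is an equimatchable set in G if and only if for every second best matching M of G (i.e., every maximal matching of size ν(G) − 1), S contains at least one vertex exposed by M. -/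
open SimpleGraph

variable {V : Type*}

/-- `M` covers the vertex set `S`. -/
def CoversSet (M : Finset (Sym2 V)) (S : Set V) : Prop := ∀ v ∈ S, Sat M v

/-- `S` is an equimatchable set in `G`: all maximal matchings of `G` covering `S`
have the same size. -/
def EquiSet (G : SimpleGraph V) (S : Set V) : Prop :=
  ∀ M M' : Finset (Sym2 V), IsMaximalMatchingIn G M → IsMaximalMatchingIn G M' →
    CoversSet M S → CoversSet M' S → M.card = M'.card

/-- A second best matching: a maximal matching of size `ν(G) - 1`. -/
def IsSecondBest (G : SimpleGraph V) (M : Finset (Sym2 V)) : Prop :=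
  IsMaximalMatchingIn G M ∧ M.card + 1 = nuNum G

section Helpers

variable [Fintype V] [DecidableEq V]

/-- The endpoints of an edge, as a finset. -/
def pairF (e : Sym2 V) : Finset V := Finset.univ.filter (· ∈ e)

lemma mem_pairF {v : V} {e : Sym2 V} : v ∈ pairF e ↔ v ∈ e := by
  simp [pairF]

lemma pairF_card {e : Sym2 V} (h : ¬ e.IsDiag) : (pairF e).card = 2 := by
  induction e using Sym2.ind with
  | _ a b =>
    have hab : a ≠ b := by simpa [Sym2.mk_isDiag_iff] using h
    have he : pairF s(a, b) = {a, b} := by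
      ext v; simp [pairF, Sym2.mem_iff]
    rw [he, Finset.card_insert_of_notMem (by simpa using hab), Finset.card_singleton]

/-- Vertices covered by `M`. -/
def supp (M : Finset (Sym2 V)) : Finset V := M.biUnion pairF

lemma mem_supp {M : Finset (Sym2 V)} {v : V} : v ∈ supp M ↔ Sat M v := by
  simp [supp, Sat, mem_pairF]

lemma supp_card {G : SimpleGraph V} {M : Finset (Sym2 V)} (hM : IsMatchingIn G M) :
    (supp M).card = 2 * M.card := by
  rw [supp, Finset.card_biUnion]
  · rw [Finset.sum_congr rfl fun e he =>
      pairF_card (G.not_isDiag_of_mem_edgeSet (hM.1 e he))]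
    simp [mul_comm]
  · intro e he f hf hef
    rw [Function.onFun, Finset.disjoint_left]
    intro v hv hv'
    exact hM.2 e he f hf hef v (mem_pairF.mp hv) (mem_pairF.mp hv')

lemma exists_exposed {G : SimpleGraph V} {M N : Finset (Sym2 V)}
    (hM : IsMatchingIn G M) (hN : IsMatchingIn G N) (h : M.card < N.card) :
    ∃ u, Sat N u ∧ ¬ Sat M u := by
  by_contra hc
  push_neg at hc
  have hsub : supp N ⊆ supp M := fun v hv => mem_supp.mpr (hc v (mem_supp.mp hv))
  have := Finset.card_le_card hsub
  rw [supp_card hM, supp_card hN] at this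
  omega

lemma insert_matching {G : SimpleGraph V} {M : Finset (Sym2 V)} (hM : IsMatchingIn G M)
    {f : Sym2 V} (hf : f ∈ G.edgeSet) (hdisj : ∀ x, x ∈ f → ¬ Sat M x) :
    IsMatchingIn G (insert f M) ∧ f ∉ M := by
  have hfM : f ∉ M := fun h => hdisj f.out.1 (Sym2.out_fst_mem f) ⟨f, h, Sym2.out_fst_mem f⟩
  refine ⟨⟨?_, ?_⟩, hfM⟩
  · intro e he
    rcases Finset.mem_insert.mp he with rfl | he
    · exact hf
    · exact hM.1 e he
  · intro a ha b hb hab x hxa hxb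
    rcases Finset.mem_insert.mp ha with h1 | h1
    · rcases Finset.mem_insert.mp hb with h2 | h2
      · exact hab (h1.trans h2.symm)
      · exact hdisj x (show x ∈ f by rw [← h1]; exact hxa) ⟨b, h2, hxb⟩
    · rcases Finset.mem_insert.mp hb with h2 | h2
      · exact hdisj x (show x ∈ f by rw [← h2]; exact hxb) ⟨a, h1, hxa⟩
      · exact hM.2 a h1 b h2 hab x hxa hxb

lemma augment_easy {G : SimpleGraph V} {M N : Finset (Sym2 V)}
    (hM : IsMatchingIn G M) (hN : IsMatchingIn G N) {f : Sym2 V} (hfN : f ∈ N)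
    (hdisj : ∀ x, x ∈ f → ¬ Sat M x) :
    ∃ M', IsMatchingIn G M' ∧ M' ⊆ M ∪ N ∧ M'.card = M.card + 1 ∧
      ∀ v, Sat M v → Sat M' v := by
  obtain ⟨hins, hfM⟩ := insert_matching hM (hN.1 f hfN) hdisj
  refine ⟨insert f M, hins, ?_, Finset.card_insert_of_notMem hfM, fun x hx => ?_⟩
  · intro e he
    rcases Finset.mem_insert.mp he with rfl | he
    · exact Finset.mem_union_right _ hfN
    · exact Finset.mem_union_left _ he
  · obtain ⟨g, hg, hxg⟩ := hx
    exact ⟨g, Finset.mem_insert_of_mem hg, hxg⟩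

lemma augment {G : SimpleGraph V} : ∀ (k : ℕ) (M N : Finset (Sym2 V)), (M \ N).card ≤ k →
    IsMatchingIn G M → IsMatchingIn G N → M.card < N.card →
    ∃ M', IsMatchingIn G M' ∧ M' ⊆ M ∪ N ∧ M'.card = M.card + 1 ∧
      ∀ v, Sat M v → Sat M' v := by
  intro k
  induction k with
  | zero =>
    intro M N hk hM hN hcard
    obtain ⟨u, hSatN, hSatMu⟩ := exists_exposed hM hN hcard
    obtain ⟨f, hfN, huf⟩ := hSatN
    obtain ⟨v, hf⟩ := Sym2.mem_iff_exists.mp huf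
    by_cases hv : Sat M v
    · exfalso
      obtain ⟨e', he'M, hve'⟩ := hv
      have hue' : u ∉ e' := fun h => hSatMu ⟨e', he'M, h⟩
      have hfe' : f ≠ e' := fun h => hue' (h ▸ huf)
      have he'N : e' ∈ N := by
        have : M ⊆ N := by
          rw [← Finset.sdiff_eq_empty_iff_subset]
          exact Finset.card_eq_zero.mp (Nat.le_zero.mp hk)
        exact this he'M
      exact hN.2 e' he'N f hfN (Ne.symm hfe') v hve' (by rw [hf]; simp [Sym2.mem_iff])
    · refine augment_easy hM hN hfN ?_
      intro x hx
      rw [hf] at hx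
      rcases Sym2.mem_iff.mp hx with rfl | rfl
      · exact hSatMu
      · exact hv
  | succ k ih =>
    intro M N hk hM hN hcard
    obtain ⟨u, hSatN, hSatMu⟩ := exists_exposed hM hN hcard
    obtain ⟨f, hfN, huf⟩ := hSatN
    obtain ⟨v, hf⟩ := Sym2.mem_iff_exists.mp huf
    by_cases hv : Sat M v
    · obtain ⟨e', he'M, hve'⟩ := hv
      obtain ⟨w, he'⟩ := Sym2.mem_iff_exists.mp hve'
      have hSatMu' : ∀ g ∈ M, u ∉ g := fun g hg hug => hSatMu ⟨g, hg, hug⟩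
      have hue' : u ∉ e' := hSatMu' e' he'M
      have hfM : f ∉ M := fun h => hSatMu ⟨f, h, huf⟩
      have hfe' : f ≠ e' := fun h => hue' (h ▸ huf)
      have hwe' : w ∈ e' := by rw [he']; simp [Sym2.mem_iff]
      have he'N : e' ∉ N := fun h =>
        hN.2 e' h f hfN (Ne.symm hfe') v hve' (by rw [hf]; simp [Sym2.mem_iff])
      have he'MN : e' ∈ M \ N := Finset.mem_sdiff.mpr ⟨he'M, he'N⟩
      set M₁ := insert f (M.erase e') with hM₁def
      have hvf : v ∈ f := by rw [hf]; simp [Sym2.mem_iff]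
      have hM₁ : IsMatchingIn G M₁ := by
        constructor
        · intro e he
          rcases Finset.mem_insert.mp he with rfl | he
          · exact hN.1 _ hfN
          · exact hM.1 _ (Finset.mem_of_mem_erase he)
        · intro a ha b hb hab x hxa hxb
          have key : ∀ c ∈ M.erase e', x ∈ f → x ∈ c → False := by
            intro c hc hxf hxc
            have hcM := Finset.mem_of_mem_erase hc
            rcases (by rw [hf] at hxf; exact Sym2.mem_iff.mp hxf : x = u ∨ x = v) with h2 | h2
            · exact hSatMu' c hcM (show u ∈ c by rw [← h2]; exact hxc)
            · exact hM.2 c hcM e' he'M (Finset.ne_of_mem_erase hc) v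
                (show v ∈ c by rw [← h2]; exact hxc) hve'
          rcases Finset.mem_insert.mp ha with h1 | h1
          · rcases Finset.mem_insert.mp hb with h2 | h2
            · exact hab (h1.trans h2.symm)
            · exact key b h2 (show x ∈ f by rw [← h1]; exact hxa) hxb
          · rcases Finset.mem_insert.mp hb with h2 | h2
            · exact key a h1 (show x ∈ f by rw [← h2]; exact hxb) hxa
            · exact hM.2 a (Finset.mem_of_mem_erase h1) b (Finset.mem_of_mem_erase h2) hab x hxa hxb
      have hfnotErase : f ∉ M.erase e' := fun h => hfM (Finset.mem_of_mem_erase h)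
      have hMpos : 0 < M.card := Finset.card_pos.mpr ⟨e', he'M⟩
      have hM₁card : M₁.card = M.card := by
        rw [hM₁def, Finset.card_insert_of_notMem hfnotErase, Finset.card_erase_of_mem he'M]
        omega
      have hM₁sub : M₁ ⊆ M ∪ N := by
        intro e he
        rcases Finset.mem_insert.mp he with rfl | he
        · exact Finset.mem_union_right _ hfN
        · exact Finset.mem_union_left _ (Finset.mem_of_mem_erase he)
      have hsdiff : M₁ \ N = (M \ N).erase e' := by
        ext g
        simp only [hM₁def, Finset.mem_sdiff, Finset.mem_insert, Finset.mem_erase]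
        constructor
        · rintro ⟨rfl | ⟨hne, hgM⟩, hgN⟩
          · exact absurd hfN hgN
          · exact ⟨hne, hgM, hgN⟩
        · rintro ⟨hne, hgM, hgN⟩
          exact ⟨Or.inr ⟨hne, hgM⟩, hgN⟩
      have hmeas : (M₁ \ N).card ≤ k := by
        rw [hsdiff, Finset.card_erase_of_mem he'MN]
        omega
      obtain ⟨M'', hM''m, hM''sub, hM''card, hM''sat⟩ :=
        ih M₁ N hmeas hM₁ hN (by rw [hM₁card]; exact hcard)
      have hsubMN : M₁ ∪ N ⊆ M ∪ N := Finset.union_subset hM₁sub Finset.subset_union_right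
      have hsatM₁ : ∀ x, Sat M x → x ≠ w → Sat M₁ x := by
        rintro x ⟨g, hgM, hxg⟩ hxw
        by_cases hge : g = e'
        · rw [hge, he'] at hxg
          rcases Sym2.mem_iff.mp hxg with h2 | h2
          · exact ⟨f, Finset.mem_insert_self _ _, show x ∈ f by rw [h2]; exact hvf⟩
          · exact absurd h2 hxw
        · exact ⟨g, Finset.mem_insert_of_mem (Finset.mem_erase.mpr ⟨hge, hgM⟩), hxg⟩
      by_cases hw : Sat M'' w
      · refine ⟨M'', hM''m, hM''sub.trans hsubMN, by rw [hM''card, hM₁card], ?_⟩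
        intro x hx
        by_cases hxw : x = w
        · exact hxw ▸ hw
        · exact hM''sat x (hsatM₁ x hx hxw)
      · have hvonly : ∀ h, h ∈ M'' → v ∈ h → h = f := by
          intro h hhM'' hvh
          rcases Finset.mem_union.mp (hM''sub hhM'') with h1 | h1
          · rcases Finset.mem_insert.mp h1 with rfl | h1
            · rfl
            · exact absurd hve'
                (hM.2 h (Finset.mem_of_mem_erase h1) e' he'M (Finset.ne_of_mem_erase h1) v hvh)
          · by_cases hhf : h = f
            · exact hhf
            · exact absurd hvf (hN.2 h h1 f hfN hhf v hvh)
        have hfM'' : f ∈ M'' := by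
          obtain ⟨h, hhM'', hvh⟩ := hM''sat v ⟨f, Finset.mem_insert_self _ _, hvf⟩
          exact hvonly h hhM'' hvh ▸ hhM''
        have he'M'' : e' ∉ M'' := fun h => hw ⟨e', h, hwe'⟩
        have he'notErase : e' ∉ M''.erase f := fun h => he'M'' (Finset.mem_of_mem_erase h)
        refine ⟨insert e' (M''.erase f), ⟨?_, ?_⟩, ?_, ?_, ?_⟩
        · intro e he
          rcases Finset.mem_insert.mp he with h1 | h1
          · rw [h1]; exact hM.1 e' he'M
          · exact hM''m.1 _ (Finset.mem_of_mem_erase h1)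
        · intro a ha b hb hab x hxa hxb
          have key : ∀ c ∈ M''.erase f, x ∈ e' → x ∈ c → False := by
            intro c hc hxe hxc
            have hcM'' := Finset.mem_of_mem_erase hc
            rcases (by rw [he'] at hxe; exact Sym2.mem_iff.mp hxe : x = v ∨ x = w) with h2 | h2
            · exact Finset.ne_of_mem_erase hc
                (hvonly c hcM'' (show v ∈ c by rw [← h2]; exact hxc))
            · exact hw ⟨c, hcM'', show w ∈ c by rw [← h2]; exact hxc⟩
          rcases Finset.mem_insert.mp ha with h1 | h1
          · rcases Finset.mem_insert.mp hb with h2 | h2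
            · exact hab (h1.trans h2.symm)
            · exact key b h2 (show x ∈ e' by rw [← h1]; exact hxa) hxb
          · rcases Finset.mem_insert.mp hb with h2 | h2
            · exact key a h1 (show x ∈ e' by rw [← h2]; exact hxb) hxa
            · exact hM''m.2 a (Finset.mem_of_mem_erase h1) b (Finset.mem_of_mem_erase h2)
                hab x hxa hxb
        · intro e he
          rcases Finset.mem_insert.mp he with rfl | he
          · exact Finset.mem_union_left _ he'M
          · exact hsubMN (hM''sub (Finset.mem_of_mem_erase he))
        · rw [Finset.card_insert_of_notMem he'notErase, Finset.card_erase_of_mem hfM'',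
            hM''card, hM₁card]
          omega
        · intro x hx
          by_cases hxw : x = w
          · exact ⟨e', Finset.mem_insert_self _ _, hxw ▸ hwe'⟩
          · by_cases hxv : x = v
            · exact ⟨e', Finset.mem_insert_self _ _, hxv ▸ hve'⟩
            · obtain ⟨g, hgM'', hxg⟩ := hM''sat x (hsatM₁ x hx hxw)
              have hgf : g ≠ f := by
                intro hgf
                have hxf : x ∈ f := by rw [← hgf]; exact hxg
                rcases (by rw [hf] at hxf; exact Sym2.mem_iff.mp hxf : x = u ∨ x = v) with h2 | h2
                · exact hSatMu (show Sat M u by rw [← h2]; exact hx)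
                · exact hxv h2
              exact ⟨g, Finset.mem_insert_of_mem (Finset.mem_erase.mpr ⟨hgf, hgM''⟩), hxg⟩
    · refine augment_easy hM hN hfN ?_
      intro x hx
      rw [hf] at hx
      rcases Sym2.mem_iff.mp hx with rfl | rfl
      · exact hSatMu
      · exact hv

lemma maximal_transfer {G : SimpleGraph V} {M M' : Finset (Sym2 V)}
    (hM : IsMaximalMatchingIn G M) (hM' : IsMatchingIn G M')
    (hsat : ∀ v, Sat M v → Sat M' v) : IsMaximalMatchingIn G M' := by
  refine ⟨hM', fun M'' hM'' hsub => ?_⟩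
  by_contra hne
  obtain ⟨g, hgM'', hgM'⟩ : ∃ g ∈ M'', g ∉ M' := by
    by_contra h
    push_neg at h
    exact hne (Finset.Subset.antisymm h hsub)
  have hmeets : ∀ e ∈ G.edgeSet, ∃ x, x ∈ e ∧ Sat M x := by
    intro e he
    by_contra hc
    push_neg at hc
    obtain ⟨hins, heM⟩ := insert_matching hM.1 he hc
    have := hM.2 _ hins (Finset.subset_insert _ _)
    exact heM (this ▸ Finset.mem_insert_self _ _)
  obtain ⟨x, hxg, hxM⟩ := hmeets g (hM''.1 g hgM'')
  obtain ⟨h, hhM', hxh⟩ := hsat x hxM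
  have hgh : g ≠ h := fun e => hgM' (e ▸ hhM')
  exact hM''.2 g hgM'' h (hsub hhM') hgh x hxg hxh

lemma empty_matching (G : SimpleGraph V) : IsMatchingIn G (∅ : Finset (Sym2 V)) :=
  ⟨by simp, by simp⟩

lemma nu_spec (G : SimpleGraph V) :
    (∃ M, IsMatchingIn G M ∧ M.card = nuNum G) ∧
      ∀ N, IsMatchingIn G N → N.card ≤ nuNum G := by
  have hbdd : BddAbove {n | ∃ M, IsMatchingIn G M ∧ M.card = n} := by
    refine ⟨Fintype.card (Sym2 V), ?_⟩
    rintro n ⟨M, _, rfl⟩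
    exact Finset.card_le_univ M
  have hne : {n | ∃ M, IsMatchingIn G M ∧ M.card = n}.Nonempty :=
    ⟨0, ∅, empty_matching G, rfl⟩
  constructor
  · exact Nat.sSup_mem hne hbdd
  · intro N hN
    exact le_csSup hbdd ⟨N, hN, rfl⟩

end Helpers

theorem stmt_12 {V : Type*} [Fintype V] (G : SimpleGraph V) (S : Set V) :
    EquiSet G S ↔ ∀ M : Finset (Sym2 V), IsSecondBest G M → ∃ v ∈ S, ¬ Sat M v := by
  letI := Classical.decEq V
  obtain ⟨⟨Mx, hMx, hMxcard⟩, hbound⟩ := nu_spec G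
  constructor
  · intro hE M hSB
    by_contra hc
    push_neg at hc
    have hlt : M.card < Mx.card := by
      have := hSB.2
      omega
    obtain ⟨M', hM', _, hM'card, hM'sat⟩ := augment _ M Mx le_rfl hSB.1.1 hMx hlt
    have hM'max : IsMaximalMatchingIn G M' := maximal_transfer hSB.1 hM' hM'sat
    have := hE M M' hSB.1 hM'max hc (fun v hv => hM'sat v (hc v hv))
    omega
  · intro h
    have key : ∀ (k : ℕ) (M : Finset (Sym2 V)), IsMaximalMatchingIn G M → CoversSet M S →
        nuNum G - M.card ≤ k → M.card = nuNum G := by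
      intro k
      induction k with
      | zero =>
        intro M hMm _ hk
        have := hbound M hMm.1
        omega
      | succ k ih =>
        intro M hMm hcov hk
        by_cases hlt : M.card < nuNum G
        · by_cases hsb : M.card + 1 = nuNum G
          · obtain ⟨v, hvS, hvsat⟩ := h M ⟨hMm, hsb⟩
            exact absurd (hcov v hvS) hvsat
          · obtain ⟨M', hM', _, hM'card, hM'sat⟩ :=
              augment _ M Mx le_rfl hMm.1 hMx (by omega)
            have hM'max := maximal_transfer hMm hM' hM'sat
            have hM'cov : CoversSet M' S := fun v hv => hM'sat v (hcov v hv)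
            have := ih M' hM'max hM'cov (by omega)
            omega
        · have := hbound M hMm.1
          omega
    intro M M' hMm hM'm hcov hcov'
    rw [key _ M hMm hcov le_rfl, key _ M' hM'm hcov' le_rfl]
end
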